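/- arXiv:1907.12998 — 2 statements merged into one kernel-verified Lean document; each statement's English description precedes it below -/
import Mathlib

section
/- Let h : ℝ^p → ℝ^p be a homeomorphism. Define y : ℝ^p × [0,1] → ℝ^{2p} by y(x,τ) = (x + f(τ)·δ_x, g(τ)·δ_x), where δ_x = h(x) - x, f(τ) = (1 - cos(πτ))/2, and g(τ) = 1 - cos(2πτ). Then for all x, x' ∈ ℝ^p and all τ ∈ (0,1), y(x,τ) = y(x',τ) implies x = x'. -/
/-- Non-intersection of the embedding paths: for a homeomorphism `h` of `ℝ^p`,
the paths `y(x,τ) = (x + f(τ)·δ_x, g(τ)·δ_x)` in `ℝ^{2p}` starting from distinct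
points never coincide at the same intermediate time `τ ∈ (0,1)`. -/
theorem embedding_paths_no_intersection (p : ℕ)
    (h : EuclideanSpace ℝ (Fin p) ≃ₜ EuclideanSpace ℝ (Fin p))
    (x x' : EuclideanSpace ℝ (Fin p)) (τ : ℝ) (hτ : τ ∈ Set.Ioo (0 : ℝ) 1)
    (heq :
      (x + ((1 - Real.cos (Real.pi * τ)) / 2) • (h x - x),
        (1 - Real.cos (2 * Real.pi * τ)) • (h x - x)) =
      (x' + ((1 - Real.cos (Real.pi * τ)) / 2) • (h x' - x'),
        (1 - Real.cos (2 * Real.pi * τ)) • (h x' - x'))) :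
    x = x' := by
  obtain ⟨h1, h2⟩ := Prod.mk.injEq .. ▸ heq
  have hg : (1 - Real.cos (2 * Real.pi * τ)) ≠ 0 := by
    have : Real.cos (2 * Real.pi * τ) ≠ 1 := by
      intro hc
      have hπ := Real.pi_pos
      have h1 : -(2*Real.pi) < 2*Real.pi*τ := by nlinarith [hτ.1, hτ.2]
      have h2 : 2*Real.pi*τ < 2*Real.pi := by nlinarith [hτ.1, hτ.2]
      have := (Real.cos_eq_one_iff_of_lt_of_lt h1 h2).1 hc
      nlinarith [hτ.1]
    intro hz
    apply this
    linarith
  have hδ : h x - x = h x' - x' := by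
    have := smul_right_injective (EuclideanSpace ℝ (Fin p)) hg h2
    exact this
  rw [hδ] at h1
  exact add_right_cancel h1
end

section
/- Let F : ℝ^p → ℝ^r be Lipschitz with constant L, and let k be a positive integer with k > L. Define the map R : ℝ^p × ℝ^r → ℝ^p × ℝ^r by R(x,y) = (0, F(x)/k). Then Lip(R) < 1, each layer id + R is injective, and the k-fold composition (id + R)^k maps (x, 0) to (x, F(x)). -/
/-- For `F : ℝ^p → ℝ^r` Lipschitz with constant `L` and integer `k > L`, the
residual `R(x,y) = (0, F x / k)` has Lipschitz constant `< 1`, each layer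
`id + R` is injective, and the `k`-fold composition maps `(x,0)` to `(x, F x)`. -/
theorem iresnet_linear_cap_universal (p r : ℕ)
    (F : EuclideanSpace ℝ (Fin p) → EuclideanSpace ℝ (Fin r))
    (L : NNReal) (hF : LipschitzWith L F)
    (k : ℕ) (hk0 : 0 < k) (hkL : (L : ℝ) < k) :
    (∃ K : NNReal, K < 1 ∧
      LipschitzWith K
        (fun z : EuclideanSpace ℝ (Fin p) × EuclideanSpace ℝ (Fin r) =>
          ((0 : EuclideanSpace ℝ (Fin p)), ((k : ℝ))⁻¹ • F z.1))) ∧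
    Function.Injective
      (fun z : EuclideanSpace ℝ (Fin p) × EuclideanSpace ℝ (Fin r) =>
        z + ((0 : EuclideanSpace ℝ (Fin p)), ((k : ℝ))⁻¹ • F z.1)) ∧
    (∀ x : EuclideanSpace ℝ (Fin p),
      (fun z : EuclideanSpace ℝ (Fin p) × EuclideanSpace ℝ (Fin r) =>
          z + ((0 : EuclideanSpace ℝ (Fin p)), ((k : ℝ))⁻¹ • F z.1))^[k]
        (x, 0) = (x, F x)) := by
  have hkR : (0:ℝ) < k := by exact_mod_cast hk0
  refine ⟨⟨?_, ?_, ?_⟩, ?_, ?_⟩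
  · exact ‖((k:ℝ))⁻¹‖₊ * (L * 1)
  · have : (‖((k:ℝ))⁻¹‖₊ * (L * 1) : ℝ) < 1 := by
      have : ‖((k:ℝ))⁻¹‖ = ((k:ℝ))⁻¹ := by
        rw [Real.norm_eq_abs, abs_of_pos (by positivity)]
      push_cast
      rw [this, mul_one]
      rw [inv_mul_lt_iff₀ hkR]
      simpa using hkL
    exact_mod_cast this
  · have h2 : LipschitzWith (‖((k:ℝ))⁻¹‖₊ * (L * 1))
        (fun z : EuclideanSpace ℝ (Fin p) × EuclideanSpace ℝ (Fin r) =>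
          ((k : ℝ))⁻¹ • F z.1) :=
      (lipschitzWith_smul ((k:ℝ))⁻¹).comp (hF.comp LipschitzWith.prod_fst)
    have h0 : LipschitzWith 0
        (fun _ : EuclideanSpace ℝ (Fin p) × EuclideanSpace ℝ (Fin r) =>
          (0 : EuclideanSpace ℝ (Fin p))) := LipschitzWith.const _
    simpa [max_eq_right (zero_le : (0:NNReal) ≤ _)] using h0.prodMk h2
  · intro z w h
    have h1 : z.1 = w.1 := by
      have := congrArg Prod.fst h
      simpa using this
    have h2 : z.2 = w.2 := by
      have := congrArg Prod.snd h
      simp only [Prod.snd_add, h1] at this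
      exact add_right_cancel this
    exact Prod.ext h1 h2
  · intro x
    have key : ∀ n : ℕ,
        (fun z : EuclideanSpace ℝ (Fin p) × EuclideanSpace ℝ (Fin r) =>
          z + ((0 : EuclideanSpace ℝ (Fin p)), ((k : ℝ))⁻¹ • F z.1))^[n]
          (x, 0) = (x, ((n:ℝ) * (k:ℝ)⁻¹) • F x) := by
      intro n
      induction n with
      | zero => simp
      | succ n ih =>
        rw [Function.iterate_succ_apply', ih]
        simp only [Prod.mk_add_mk, add_zero]
        congr 1
        rw [← add_smul]
        push_cast
        ring_nf
    rw [key k]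
    rw [mul_inv_cancel₀ (ne_of_gt hkR), one_smul]
end
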